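/- Let α ∈ (0,1), 0 ≤ t < τ < T and ϑ ∈ (0,1]. Then |∫ₜ^τ (τ + ϑ(T−τ) − ξ)^(α−1) dξ − (τ−t) ϑ^(α−1) (T−t)^(α−1)| ≤ 2(τ−t) [ϑ^(α−1)(T−τ)^(α−1) − (τ + ϑ(T−τ) − t)^(α−1)]. -/
import Mathlib


open MeasureTheory Real Set Filter

theorem stmt_5 (α t τ T ϑ : ℝ) (hα : α ∈ Set.Ioo (0:ℝ) 1)
    (ht : 0 ≤ t) (htτ : t < τ) (hτT : τ < T) (hϑ : ϑ ∈ Set.Ioc (0:ℝ) 1) :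
    |(∫ ξ in t..τ, (τ + ϑ * (T - τ) - ξ) ^ (α - 1)) -
        (τ - t) * ϑ ^ (α - 1) * (T - t) ^ (α - 1)| ≤
      2 * (τ - t) * (ϑ ^ (α - 1) * (T - τ) ^ (α - 1) - (τ + ϑ * (T - τ) - t) ^ (α - 1)) := by
  obtain ⟨hα0, hα1⟩ := hα
  obtain ⟨hϑ0, hϑ1⟩ := hϑ
  have hαneg : α - 1 ≤ 0 := by linarith
  set A := τ + ϑ * (T - τ) with hA
  have hTτ : 0 < T - τ := by linarith
  have hb : 0 < ϑ * (T - τ) := mul_pos hϑ0 hTτ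
  have hAt : 0 < A - t := by simp only [hA]; nlinarith
  -- continuity / integrability
  have hcont : ContinuousOn (fun ξ : ℝ => (A - ξ) ^ (α - 1)) (Set.uIcc t τ) := by
    apply ContinuousOn.rpow_const
    · fun_prop
    · intro x hx
      rw [Set.uIcc_of_le htτ.le] at hx
      left
      have : x ≤ τ := hx.2
      nlinarith
  have hint : IntervalIntegrable (fun ξ : ℝ => (A - ξ) ^ (α - 1)) volume t τ :=
    hcont.intervalIntegrable
  -- pointwise bounds
  have hub : ∀ ξ ∈ Set.Icc t τ, (A - ξ) ^ (α - 1) ≤ (ϑ * (T - τ)) ^ (α - 1) := by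
    intro ξ hξ
    apply rpow_le_rpow_of_nonpos hb _ hαneg
    simp only [hA]; linarith [hξ.2]
  have hlb : ∀ ξ ∈ Set.Icc t τ, (A - t) ^ (α - 1) ≤ (A - ξ) ^ (α - 1) := by
    intro ξ hξ
    have hAξ : 0 < A - ξ := by simp only [hA]; nlinarith [hξ.2]
    apply rpow_le_rpow_of_nonpos hAξ _ hαneg
    linarith [hξ.1]
  have hI1 : (∫ ξ in t..τ, (A - ξ) ^ (α - 1)) ≤ (τ - t) * ((ϑ * (T - τ)) ^ (α - 1)) := by
    have := intervalIntegral.integral_mono_on htτ.le hint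
      intervalIntegrable_const (g := fun _ => (ϑ * (T - τ)) ^ (α - 1)) hub
    simpa [smul_eq_mul] using this
  have hI2 : (τ - t) * ((A - t) ^ (α - 1)) ≤ ∫ ξ in t..τ, (A - ξ) ^ (α - 1) := by
    have := intervalIntegral.integral_mono_on htτ.le
      intervalIntegrable_const hint (f := fun _ => (A - t) ^ (α - 1)) hlb
    simpa [smul_eq_mul] using this
  -- bounds on the middle term
  have hmul1 : (ϑ * (T - τ)) ^ (α - 1) = ϑ ^ (α - 1) * (T - τ) ^ (α - 1) :=
    Real.mul_rpow hϑ0.le hTτ.le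
  have hmul2 : (ϑ * (T - t)) ^ (α - 1) = ϑ ^ (α - 1) * (T - t) ^ (α - 1) :=
    Real.mul_rpow hϑ0.le (by linarith)
  have hM1 : ϑ ^ (α - 1) * (T - t) ^ (α - 1) ≤ ϑ ^ (α - 1) * (T - τ) ^ (α - 1) := by
    rw [← hmul1, ← hmul2]
    exact rpow_le_rpow_of_nonpos hb (by nlinarith) hαneg
  have hM2 : (A - t) ^ (α - 1) ≤ ϑ ^ (α - 1) * (T - t) ^ (α - 1) := by
    rw [← hmul2]
    apply rpow_le_rpow_of_nonpos (mul_pos hϑ0 (by linarith)) _ hαneg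
    simp only [hA]; nlinarith
  have hpos : 0 ≤ ϑ ^ (α - 1) * (T - τ) ^ (α - 1) - (A - t) ^ (α - 1) := by
    rw [← hmul1]
    have hle : ϑ * (T - τ) ≤ A - t := by simp only [hA]; linarith
    have := rpow_le_rpow_of_nonpos hb hle hαneg
    linarith
  have hτt : 0 < τ - t := by linarith
  rw [abs_le]
  constructor <;> nlinarith [hI1, hI2, hM1, hM2, hpos,
    mul_le_mul_of_nonneg_left hM1 hτt.le, mul_le_mul_of_nonneg_left hM2 hτt.le]
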